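/- arXiv:2501.10876 — 2 statements merged into one kernel-verified Lean document; each statement's English description precedes it below -/
import Mathlib

section
/- Let p ∈ [1,∞] and let F : ℝ_{≥0} → ℝ_{≥0} be an increasing bijection (a reparameterization) which is K-Lipschitz for some K > 0, i.e. |F(b) − F(a)| ≤ K|b − a| for all a, b ∈ ℝ_{≥0}. Then for all persistence diagrams D, D' (finite multisets of points in V = {(a,b) ∈ ℝ_{≥0}² : a ≤ b}), one has W_p(F(D), F(D')) ≤ K · W_p(D, D'), where F(D) denotes the persistence diagram obtained by replacing each point (a,b) of D with (F(a), F(b)). -/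
open scoped ENNReal BigOperators

/-- The `p`-norm distance between two points of the plane, valued in `ℝ≥0∞`
(`p = ∞` gives the sup-norm). -/
noncomputable def dp (p : ℝ≥0∞) (x y : ℝ × ℝ) : ℝ≥0∞ :=
  if p = ∞ then max (ENNReal.ofReal |x.1 - y.1|) (ENNReal.ofReal |x.2 - y.2|)
  else (ENNReal.ofReal |x.1 - y.1| ^ p.toReal + ENNReal.ofReal |x.2 - y.2| ^ p.toReal)
      ^ (1 / p.toReal)

/-- Distance (in the `p`-norm) from a point to the diagonal `Δ = {(z,z) : z ≥ 0}`. -/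
noncomputable def dDelta (p : ℝ≥0∞) (x : ℝ × ℝ) : ℝ≥0∞ :=
  ⨅ z ∈ Set.Ici (0 : ℝ), dp p x (z, z)

/-- A persistence diagram: a finite (multi)family of points of the plane. -/
structure PD where
  m : ℕ
  pts : Fin m → ℝ × ℝ

/-- Validity: all points lie in `V = {(a,b) : 0 ≤ a ≤ b}`. -/
def PD.valid (D : PD) : Prop := ∀ i, 0 ≤ (D.pts i).1 ∧ (D.pts i).1 ≤ (D.pts i).2

/-- Applying a reparameterization `F` to each coordinate of each point of a diagram. -/
noncomputable def PD.map (F : ℝ → ℝ) (D : PD) : PD :=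
  ⟨D.m, fun i => (F (D.pts i).1, F (D.pts i).2)⟩

/-- The `p`-norm of a finite family of values in `ℝ≥0∞` (`p = ∞` gives the max). -/
noncomputable def pNormE (p : ℝ≥0∞) {ι : Type} (s : Finset ι) (f : ι → ℝ≥0∞) : ℝ≥0∞ :=
  if p = ∞ then s.sup f else (∑ i ∈ s, f i ^ p.toReal) ^ (1 / p.toReal)

/-- The `p`-norm of a triple of values in `ℝ≥0∞`. -/
noncomputable def pNorm3 (p : ℝ≥0∞) (u v w : ℝ≥0∞) : ℝ≥0∞ :=
  if p = ∞ then max u (max v w)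
  else (u ^ p.toReal + v ^ p.toReal + w ^ p.toReal) ^ (1 / p.toReal)

/-- The `p`-Wasserstein distance between persistence diagrams: the infimum, over all
partial injective matchings `α : I → {1,…,n}` (`I ⊆ {1,…,m}`), of the `p`-norm of the
triple (cost of matched points, cost of unmatched points of `D` to the diagonal,
cost of unmatched points of `D'` to the diagonal). -/
noncomputable def Wdist (p : ℝ≥0∞) (D D' : PD) : ℝ≥0∞ :=
  ⨅ (I : Finset (Fin D.m)) (α : ↥I → Fin D'.m) (_ : Function.Injective α),
    pNorm3 p
      (pNormE p Finset.univ (fun i : ↥I => dp p (D.pts i.1) (D'.pts (α i))))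
      (pNormE p Iᶜ (fun i => dDelta p (D.pts i)))
      (pNormE p (Finset.univ.image α)ᶜ (fun j => dDelta p (D'.pts j)))


lemma rpow_factor {c S : ℝ≥0∞} {t : ℝ} (ht : 0 < t) :
    (c ^ t * S) ^ (1 / t) = c * S ^ (1 / t) := by
  rw [ENNReal.mul_rpow_of_nonneg _ _ (by positivity), ← ENNReal.rpow_mul,
    mul_one_div, div_self ht.ne', ENNReal.rpow_one]

lemma dp_le_mul {p : ℝ≥0∞} (hp : 1 ≤ p) (c : ℝ≥0∞) {x y x' y' : ℝ × ℝ}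
    (h1 : ENNReal.ofReal |x.1 - y.1| ≤ c * ENNReal.ofReal |x'.1 - y'.1|)
    (h2 : ENNReal.ofReal |x.2 - y.2| ≤ c * ENNReal.ofReal |x'.2 - y'.2|) :
    dp p x y ≤ c * dp p x' y' := by
  unfold dp
  split_ifs with h
  · exact max_le (h1.trans (mul_le_mul_right (le_max_left _ _) c))
      (h2.trans (mul_le_mul_right (le_max_right _ _) c))
  · have ht : 0 < p.toReal := ENNReal.toReal_pos (zero_lt_one.trans_le hp).ne' h
    calc (ENNReal.ofReal |x.1 - y.1| ^ p.toReal + ENNReal.ofReal |x.2 - y.2| ^ p.toReal) ^ (1 / p.toReal)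
        ≤ ((c * ENNReal.ofReal |x'.1 - y'.1|) ^ p.toReal
            + (c * ENNReal.ofReal |x'.2 - y'.2|) ^ p.toReal) ^ (1 / p.toReal) :=
          ENNReal.rpow_le_rpow (add_le_add (ENNReal.rpow_le_rpow h1 ht.le)
            (ENNReal.rpow_le_rpow h2 ht.le)) (by positivity)
      _ = (c ^ p.toReal * (ENNReal.ofReal |x'.1 - y'.1| ^ p.toReal
            + ENNReal.ofReal |x'.2 - y'.2| ^ p.toReal)) ^ (1 / p.toReal) := by
          rw [ENNReal.mul_rpow_of_nonneg _ _ ht.le, ENNReal.mul_rpow_of_nonneg _ _ ht.le, mul_add]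
      _ = _ := rpow_factor ht

lemma pNormE_le_mul {p : ℝ≥0∞} (hp : 1 ≤ p) (c : ℝ≥0∞) {ι : Type} (s : Finset ι)
    {f g : ι → ℝ≥0∞} (h : ∀ i ∈ s, f i ≤ c * g i) :
    pNormE p s f ≤ c * pNormE p s g := by
  unfold pNormE
  split_ifs with hip
  · exact Finset.sup_le fun i hi => (h i hi).trans (mul_le_mul_right (Finset.le_sup hi) c)
  · have ht : 0 < p.toReal := ENNReal.toReal_pos (zero_lt_one.trans_le hp).ne' hip
    calc (∑ i ∈ s, f i ^ p.toReal) ^ (1 / p.toReal)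
        ≤ (∑ i ∈ s, (c * g i) ^ p.toReal) ^ (1 / p.toReal) :=
          ENNReal.rpow_le_rpow (Finset.sum_le_sum fun i hi =>
            ENNReal.rpow_le_rpow (h i hi) ht.le) (by positivity)
      _ = (c ^ p.toReal * ∑ i ∈ s, g i ^ p.toReal) ^ (1 / p.toReal) := by
          rw [Finset.mul_sum]
          congr 1
          exact Finset.sum_congr rfl fun i _ => ENNReal.mul_rpow_of_nonneg _ _ ht.le
      _ = _ := rpow_factor ht

lemma pNorm3_le_mul {p : ℝ≥0∞} (hp : 1 ≤ p) (c : ℝ≥0∞) {u v w u' v' w' : ℝ≥0∞}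
    (hu : u ≤ c * u') (hv : v ≤ c * v') (hw : w ≤ c * w') :
    pNorm3 p u v w ≤ c * pNorm3 p u' v' w' := by
  unfold pNorm3
  split_ifs with h
  · exact max_le (hu.trans (mul_le_mul_right (le_max_left _ _) c))
      (max_le (hv.trans (mul_le_mul_right ((le_max_left _ _).trans (le_max_right _ _)) c))
        (hw.trans (mul_le_mul_right ((le_max_right _ _).trans (le_max_right _ _)) c)))
  · have ht : 0 < p.toReal := ENNReal.toReal_pos (zero_lt_one.trans_le hp).ne' h
    calc (u ^ p.toReal + v ^ p.toReal + w ^ p.toReal) ^ (1 / p.toReal)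
        ≤ ((c * u') ^ p.toReal + (c * v') ^ p.toReal + (c * w') ^ p.toReal) ^ (1 / p.toReal) :=
          ENNReal.rpow_le_rpow (add_le_add (add_le_add (ENNReal.rpow_le_rpow hu ht.le)
            (ENNReal.rpow_le_rpow hv ht.le)) (ENNReal.rpow_le_rpow hw ht.le)) (by positivity)
      _ = (c ^ p.toReal * (u' ^ p.toReal + v' ^ p.toReal + w' ^ p.toReal)) ^ (1 / p.toReal) := by
          rw [ENNReal.mul_rpow_of_nonneg _ _ ht.le, ENNReal.mul_rpow_of_nonneg _ _ ht.le,
            ENNReal.mul_rpow_of_nonneg _ _ ht.le, mul_add, mul_add]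
      _ = _ := rpow_factor ht

/-- If `F : ℝ≥0 → ℝ≥0` is an increasing bijection which is `K`-Lipschitz
(`K > 0`), then for all persistence diagrams `D, D'` with points in
`V = {(a,b) : 0 ≤ a ≤ b}` one has `W_p(F(D), F(D')) ≤ K · W_p(D, D')`. -/
theorem wasserstein_reparam_lipschitz
    (p : ℝ≥0∞) (hp : 1 ≤ p) (K : ℝ) (hK : 0 < K) (F : ℝ → ℝ)
    (hmono : StrictMonoOn F (Set.Ici (0 : ℝ)))
    (hbij : Set.BijOn F (Set.Ici (0 : ℝ)) (Set.Ici (0 : ℝ)))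
    (hlip : ∀ a ∈ Set.Ici (0 : ℝ), ∀ b ∈ Set.Ici (0 : ℝ), |F b - F a| ≤ K * |b - a|)
    (D D' : PD) (hD : D.valid) (hD' : D'.valid) :
    Wdist p (D.map F) (D'.map F) ≤ ENNReal.ofReal K * Wdist p D D' := by
  set c := ENNReal.ofReal K with hc
  have hc0 : c ≠ 0 := by simp [hc, ENNReal.ofReal_eq_zero]; linarith
  have hcI : c ≠ ∞ := ENNReal.ofReal_ne_top
  have key : ∀ a ∈ Set.Ici (0:ℝ), ∀ b ∈ Set.Ici (0:ℝ),
      ENNReal.ofReal |F a - F b| ≤ c * ENNReal.ofReal |a - b| := by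
    intro a ha b hb
    rw [hc, ← ENNReal.ofReal_mul hK.le]
    exact ENNReal.ofReal_le_ofReal (by simpa [abs_sub_comm] using hlip b hb a ha)
  have hddel : ∀ x : ℝ × ℝ, 0 ≤ x.1 → 0 ≤ x.2 →
      dDelta p (F x.1, F x.2) ≤ c * dDelta p x := by
    intro x h1 h2
    simp only [dDelta, ENNReal.mul_iInf_of_ne hc0 hcI]
    refine le_iInf₂ fun z hz => ?_
    refine le_trans (iInf₂_le (F z) (hbij.mapsTo hz)) ?_
    exact dp_le_mul hp c (key x.1 h1 z hz) (key x.2 h2 z hz)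
  have step : ∀ (I : Finset (Fin D.m)) (α : ↥I → Fin D'.m), Function.Injective α →
      Wdist p (D.map F) (D'.map F) ≤ c * pNorm3 p
        (pNormE p Finset.univ (fun i : ↥I => dp p (D.pts i.1) (D'.pts (α i))))
        (pNormE p Iᶜ (fun i => dDelta p (D.pts i)))
        (pNormE p (Finset.univ.image α)ᶜ (fun j => dDelta p (D'.pts j))) := by
    intro I α hα
    refine le_trans (iInf_le_of_le I (iInf_le_of_le α (iInf_le_of_le hα le_rfl))) ?_
    refine pNorm3_le_mul hp c ?_ ?_ ?_
    · refine pNormE_le_mul hp c _ fun i _ => ?_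
      exact dp_le_mul hp c
        (key (D.pts i.1).1 (hD i.1).1 (D'.pts (α i)).1 (hD' (α i)).1)
        (key (D.pts i.1).2 ((hD i.1).1.trans (hD i.1).2) (D'.pts (α i)).2
          ((hD' (α i)).1.trans (hD' (α i)).2))
    · exact pNormE_le_mul hp c _ fun i _ =>
        hddel (D.pts i) (hD i).1 ((hD i).1.trans (hD i).2)
    · exact pNormE_le_mul hp c _ fun j _ =>
        hddel (D'.pts j) (hD' j).1 ((hD' j).1.trans (hD' j).2)
  conv_rhs => rw [Wdist]
  simp only [ENNReal.mul_iInf_of_ne hc0 hcI]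
  exact le_iInf fun I => le_iInf fun α => le_iInf fun hα => step I α hα
end

section
/- Let p ∈ [1,∞] and let F : ℝ_{≥0} → ℝ_{≥0} be an increasing bijection which is K-Lipschitz for some K > 0. For a persistence diagram D = {x_i}_{i=1,…,m} with points x_i = (a_i,b_i) ∈ V ordered non-decreasingly by the lifetime ℓ_F(a,b) := F(b) − F(a), define the stable rank vector r_{p,F}(D) = (r_0, r_1, …, r_m) ∈ ℝ^∞ by r_i := 2^{(1−p)/p} ‖(ℓ_F(a_1,b_1), …, ℓ_F(a_{m−i},b_{m−i}))‖_p for i ∈ {0,…,m−1} (with the convention 2^{(1−p)/p} = 2^{−1} when p = ∞) and r_m := 0, extended by zeros to an element of ℝ^∞. Then for all persistence diagrams D, D' one has ‖r_{p,F}(D) − r_{p,F}(D')‖_∞ ≤ K · W_p(D, D'). -/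
open scoped ENNReal NNReal BigOperators

/-- The lifetime of a point `(a,b)` induced by a reparameterization `F`: `ℓ_F(a,b) = F(b) − F(a)`. -/
noncomputable def lifetime (F : ℝ → ℝ) (x : ℝ × ℝ) : ℝ := F x.2 - F x.1

/-- The constant `2^{(1−p)/p}`, with the convention that it equals `2^{-1}` for `p = ∞`. -/
noncomputable def srConst (p : ℝ≥0∞) : ℝ :=
  if p = ∞ then 1 / 2 else (2 : ℝ) ^ ((1 - p.toReal) / p.toReal)

/-- The `p`-norm of a finite real-valued family (`p = ∞` gives the max of absolute values). -/
noncomputable def pNormR (p : ℝ≥0∞) {ι : Type} (s : Finset ι) (f : ι → ℝ) : ℝ :=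
  if p = ∞ then (((s.sup fun i => Real.nnabs (f i)) : ℝ≥0) : ℝ)
  else (∑ i ∈ s, |f i| ^ p.toReal) ^ (1 / p.toReal)

/-- The stable rank vector `r_{p,F}(D) = (r_0, …, r_m, 0, 0, …) ∈ ℝ^∞`, where (for a diagram
whose points are ordered non-decreasingly by lifetime `ℓ_F`)
`r_i = 2^{(1−p)/p} ‖(ℓ_F(x_1), …, ℓ_F(x_{m−i}))‖_p` for `i < m`, and `r_i = 0` for `i ≥ m`. -/
noncomputable def stableRankVec (p : ℝ≥0∞) (F : ℝ → ℝ) (D : PD) : ℕ → ℝ := fun i =>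
  if i < D.m then
    srConst p *
      pNormR p (Finset.univ.filter fun j : Fin D.m => (j : ℕ) < D.m - i)
        (fun j => lifetime F (D.pts j))
  else 0

/-! ### Auxiliary lemmas -/

lemma toReal_q {p : ℝ≥0∞} (hp : 1 ≤ p) (hpi : p ≠ ∞) : 1 ≤ p.toReal := by
  rw [← ENNReal.toReal_one]; exact ENNReal.toReal_mono hpi hp

lemma pt_ne_zero {p : ℝ≥0∞} (hp : 1 ≤ p) (hpi : p ≠ ∞) : p.toReal ≠ 0 := by
  have := toReal_q hp hpi; linarith

lemma key_ineq {q : ℝ} (hq : 1 ≤ q) {x y : ℝ} (hx : 0 ≤ x) (hy : 0 ≤ y) :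
    (2:ℝ) ^ ((1-q)/q) * (x + y) ≤ (x ^ q + y ^ q) ^ (1/q) := by
  have hq0 : 0 < q := lt_of_lt_of_le one_pos hq
  have h := NNReal.rpow_add_le_mul_rpow_add_rpow x.toNNReal y.toNNReal hq
  have hR : (x + y) ^ q ≤ 2 ^ (q-1) * (x^q + y^q) := by
    have := (NNReal.coe_le_coe).2 h
    push_cast at this
    rw [Real.coe_toNNReal x hx, Real.coe_toNNReal y hy] at this
    convert this using 2 <;> norm_num
  have h2 : x + y ≤ (2 ^ (q-1) * (x^q + y^q)) ^ (1/q) := by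
    have h3 := Real.rpow_le_rpow (by positivity) hR (by positivity : (0:ℝ) ≤ 1/q)
    rwa [← Real.rpow_mul (by positivity), mul_one_div, div_self hq0.ne',
      Real.rpow_one] at h3
  have h4 : (2 ^ (q-1) * (x^q + y^q)) ^ (1/q)
      = 2 ^ ((q-1)/q) * (x^q + y^q) ^ (1/q) := by
    rw [Real.mul_rpow (by positivity) (by positivity), ← Real.rpow_mul (by norm_num),
      mul_one_div]
  have h5 : (2:ℝ) ^ ((1-q)/q) * (2:ℝ) ^ ((q-1)/q) = 1 := by
    rw [← Real.rpow_add (by norm_num)]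
    rw [← add_div]; norm_num [Real.rpow_zero]
  calc (2:ℝ) ^ ((1-q)/q) * (x + y)
      ≤ (2:ℝ) ^ ((1-q)/q) * (2 ^ ((q-1)/q) * (x^q + y^q) ^ (1/q)) := by
        refine mul_le_mul_of_nonneg_left ?_ (by positivity)
        rw [← h4]; exact h2
    _ = (x^q + y^q) ^ (1/q) := by rw [← mul_assoc, h5, one_mul]

section pn
variable {p : ℝ≥0∞} {ι ι' : Type} {s t : Finset ι} {f g : ι → ℝ}

lemma pNormR_nonneg : 0 ≤ pNormR p s f := by
  unfold pNormR; split
  · positivity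
  · positivity

lemma nnreal_sup_mul {c : ℝ≥0} {h : ι → ℝ≥0} :
    s.sup (fun i => c * h i) = c * s.sup h := by
  classical
  induction s using Finset.induction with
  | empty => simp
  | insert _ _ hx ih =>
    rw [Finset.sup_insert, Finset.sup_insert, ih]
    exact (mul_right_mono (a := c)).map_max.symm

lemma pNormR_mono (hp : 1 ≤ p) (hf : ∀ i ∈ s, 0 ≤ f i) (hfg : ∀ i ∈ s, f i ≤ g i) :
    pNormR p s f ≤ pNormR p s g := by
  unfold pNormR; split
  · refine NNReal.coe_le_coe.2 (Finset.sup_mono_fun fun i hi => ?_)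
    rw [Real.nnabs_of_nonneg (hf i hi), Real.nnabs_of_nonneg ((hf i hi).trans (hfg i hi))]
    exact Real.toNNReal_mono (hfg i hi)
  · next hpi =>
    have hq : 1 ≤ p.toReal := toReal_q hp hpi
    refine Real.rpow_le_rpow (by positivity) (Finset.sum_le_sum fun i hi => ?_) (by positivity)
    refine Real.rpow_le_rpow (abs_nonneg _) ?_ (by linarith)
    rw [abs_of_nonneg (hf i hi), abs_of_nonneg ((hf i hi).trans (hfg i hi))]
    exact hfg i hi

lemma pNormR_subset (hp : 1 ≤ p) (hst : s ⊆ t) : pNormR p s f ≤ pNormR p t f := by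
  unfold pNormR; split
  · exact NNReal.coe_le_coe.2 (Finset.sup_mono hst)
  · next hpi =>
    refine Real.rpow_le_rpow (by positivity) ?_ (by positivity)
    exact Finset.sum_le_sum_of_subset_of_nonneg hst fun i _ _ => by positivity

lemma pNormR_smul (hp : 1 ≤ p) {c : ℝ} (hc : 0 ≤ c) :
    pNormR p s (fun i => c * f i) = c * pNormR p s f := by
  unfold pNormR; split
  · have : ∀ i, Real.nnabs (c * f i) = c.toNNReal * Real.nnabs (f i) := fun i => by
      rw [map_mul, Real.nnabs_of_nonneg hc]
    simp_rw [this]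
    rw [nnreal_sup_mul]
    push_cast
    rw [Real.coe_toNNReal c hc]
  · next hpi =>
    have hq : 1 ≤ p.toReal := toReal_q hp hpi
    have hq0 : 0 < p.toReal := by linarith
    have : ∀ i, |c * f i| ^ p.toReal = c ^ p.toReal * |f i| ^ p.toReal := fun i => by
      rw [abs_mul, abs_of_nonneg hc, Real.mul_rpow hc (abs_nonneg _)]
    simp_rw [this, ← Finset.mul_sum]
    rw [Real.mul_rpow (by positivity) (by positivity),
      ← Real.rpow_mul hc, mul_one_div, div_self hq0.ne', Real.rpow_one]

lemma pNormR_add (hp : 1 ≤ p) :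
    pNormR p s (fun i => f i + g i) ≤ pNormR p s f + pNormR p s g := by
  unfold pNormR; split
  · rw [← NNReal.coe_add, NNReal.coe_le_coe]
    refine Finset.sup_le fun i hi => ?_
    have h1 : Real.nnabs (f i + g i) ≤ Real.nnabs (f i) + Real.nnabs (g i) := by
      rw [← NNReal.coe_le_coe]
      push_cast [Real.coe_nnabs]
      exact abs_add_le _ _
    have h2 : Real.nnabs (f i) ≤ s.sup fun j => Real.nnabs (f j) :=
      Finset.le_sup (f := fun j => Real.nnabs (f j)) hi
    have h3 : Real.nnabs (g i) ≤ s.sup fun j => Real.nnabs (g j) :=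
      Finset.le_sup (f := fun j => Real.nnabs (g j)) hi
    exact le_trans h1 (add_le_add h2 h3)
  · next hpi => exact Real.Lp_add_le s f g (toReal_q hp hpi)

lemma pNormR_image [DecidableEq ι] {e : ι' → ι} {s' : Finset ι'} (he : Set.InjOn e s') :
    pNormR p (s'.image e) f = pNormR p s' (fun i => f (e i)) := by
  unfold pNormR; split
  · rw [Finset.sup_image]; rfl
  · rw [Finset.sum_image (fun a ha b hb => he (by simpa using ha) (by simpa using hb))]

lemma pNormR_congr (h : ∀ i ∈ s, f i = g i) : pNormR p s f = pNormR p s g := by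
  unfold pNormR; split
  · norm_cast
    exact Finset.sup_congr rfl fun i hi => by rw [h i hi]
  · rw [Finset.sum_congr rfl fun i hi => by rw [h i hi]]

lemma pNormR_zeropad (hp : 1 ≤ p) (hst : s ⊆ t) (h0 : ∀ i ∈ t, i ∉ s → f i = 0) :
    pNormR p t f = pNormR p s f := by
  unfold pNormR; split
  · norm_cast
    refine le_antisymm (Finset.sup_le fun i hi => ?_) (Finset.sup_mono hst)
    by_cases his : i ∈ s
    · exact Finset.le_sup (f := fun j => Real.nnabs (f j)) his
    · rw [h0 i hi his]; simp
  · next hpi =>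
    rw [Finset.sum_subset hst fun i hit his => by
      rw [h0 i hit his, abs_zero, Real.zero_rpow (pt_ne_zero hp hpi)]]
end pn

lemma strictMono_fin_le {k N : ℕ} {g : Fin k → Fin N} (hg : StrictMono g) (t : Fin k) :
    (t : ℕ) ≤ (g t : ℕ) := by
  let G : ℕ → ℕ := fun i => if h : i < k then (g ⟨i, h⟩ : ℕ) else N + i
  have hG : StrictMono G := by
    intro i j hij
    simp only [G]
    split_ifs with hi hj hj
    · exact hg (show (⟨i, hi⟩ : Fin k) < ⟨j, hj⟩ from hij)
    · exact lt_of_lt_of_le (g ⟨i, hi⟩).2 (Nat.le_add_right _ _)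
    · omega
    · omega
  have := hG.le_apply (x := (t : ℕ))
  simpa [G, t.2] using this

lemma core {p : ℝ≥0∞} (hp : 1 ≤ p) {N k : ℕ} (hk : k ≤ N) (MU MV : Fin N → ℝ)
    (hUm : Monotone MU) (hU0 : ∀ t, 0 ≤ MU t) (σ : Equiv.Perm (Fin N)) :
    pNormR p (Finset.univ.filter fun t : Fin N => (t : ℕ) < k) MU ≤
      pNormR p (Finset.univ.filter fun t : Fin N => (t : ℕ) < k) MV +
      pNormR p Finset.univ (fun t => |MU t - MV (σ t)|) := by
  classical
  set T0 : Finset (Fin N) := Finset.univ.filter (fun t : Fin N => (t : ℕ) < k) with hT0def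
  have hinj : Function.Injective (Fin.castLE hk) := Fin.castLE_injective hk
  have hT0 : T0 = Finset.univ.image (Fin.castLE hk) := by
    ext t
    simp only [hT0def, Finset.mem_filter, Finset.mem_univ, true_and, Finset.mem_image]
    constructor
    · intro ht; exact ⟨⟨t, ht⟩, Fin.ext rfl⟩
    · rintro ⟨j, rfl⟩; exact j.2
  set S : Finset (Fin N) := T0.image σ.symm with hSdef
  have hcardT0 : T0.card = k := by
    rw [hT0, Finset.card_image_of_injective _ hinj, Finset.card_univ, Fintype.card_fin]
  have hcardS : S.card = k := by
    rw [hSdef, Finset.card_image_of_injective _ σ.symm.injective, hcardT0]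
  set g : Fin k → Fin N := ⇑(S.orderEmbOfFin hcardS) with hgdef
  have hgS : ∀ t, g t ∈ S := fun t => S.orderEmbOfFin_mem hcardS t
  have hgmono : StrictMono g := (S.orderEmbOfFin hcardS).strictMono
  have hle : ∀ t : Fin k, MU (Fin.castLE hk t) ≤ MU (g t) := fun t => by
    apply hUm
    have := strictMono_fin_le hgmono t
    exact Fin.le_def.2 (by simpa using this)
  have himg : Finset.univ.image g = S := by
    apply Finset.eq_of_subset_of_card_le
    · intro x hx
      simp only [Finset.mem_image] at hx
      obtain ⟨t, -, rfl⟩ := hx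
      exact hgS t
    · rw [hcardS, Finset.card_image_of_injective _ hgmono.injective, Finset.card_univ,
        Fintype.card_fin]
  have step_a : pNormR p T0 MU ≤ pNormR p S MU := by
    calc pNormR p T0 MU = pNormR p Finset.univ (fun t : Fin k => MU (Fin.castLE hk t)) := by
          rw [hT0, pNormR_image (hinj.injOn)]
      _ ≤ pNormR p Finset.univ (fun t : Fin k => MU (g t)) :=
          pNormR_mono hp (fun i _ => hU0 _) (fun i _ => hle i)
      _ = pNormR p S MU := by rw [← himg, pNormR_image (hgmono.injective.injOn)]
  have hSimg : S.image σ = T0 := by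
    rw [hSdef, Finset.image_image]
    have : (σ ∘ σ.symm) = id := by funext x; simp
    rw [this, Finset.image_id]
  have step_b : pNormR p S MU
      ≤ pNormR p T0 MV + pNormR p Finset.univ (fun t => |MU t - MV (σ t)|) := by
    calc pNormR p S MU
        ≤ pNormR p S (fun s => MV (σ s) + |MU s - MV (σ s)|) := by
          refine pNormR_mono hp (fun i _ => hU0 _) (fun i _ => ?_)
          have := le_abs_self (MU i - MV (σ i))
          linarith
      _ ≤ pNormR p S (fun s => MV (σ s)) + pNormR p S (fun s => |MU s - MV (σ s)|) :=
          pNormR_add hp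
      _ ≤ pNormR p T0 MV + pNormR p Finset.univ (fun t => |MU t - MV (σ t)|) := by
          refine add_le_add ?_ (pNormR_subset hp (Finset.subset_univ _))
          rw [← hSimg, pNormR_image (σ.injective.injOn)]
  exact le_trans step_a step_b

noncomputable def dpR (p : ℝ≥0∞) (x y : ℝ × ℝ) : ℝ :=
  if p = ∞ then max |x.1 - y.1| |x.2 - y.2|
  else (|x.1 - y.1| ^ p.toReal + |x.2 - y.2| ^ p.toReal) ^ (1 / p.toReal)

lemma dpR_nonneg {p : ℝ≥0∞} {x y : ℝ × ℝ} : 0 ≤ dpR p x y := by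
  unfold dpR; split
  · exact le_max_of_le_left (abs_nonneg _)
  · positivity

lemma srConst_pos {p : ℝ≥0∞} : 0 < srConst p := by
  unfold srConst; split
  · norm_num
  · positivity

lemma dp_eq {p : ℝ≥0∞} (hp : 1 ≤ p) (x y : ℝ × ℝ) :
    dp p x y = ENNReal.ofReal (dpR p x y) := by
  have hmono : Monotone ENNReal.ofReal := fun a b h => ENNReal.ofReal_le_ofReal h
  unfold dp dpR; split
  · exact (hmono.map_max).symm
  · next hpi =>
    have hq : 1 ≤ p.toReal := toReal_q hp hpi
    rw [ENNReal.ofReal_rpow_of_nonneg (abs_nonneg _) (by linarith),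
      ENNReal.ofReal_rpow_of_nonneg (abs_nonneg _) (by linarith),
      ← ENNReal.ofReal_add (by positivity) (by positivity),
      ENNReal.ofReal_rpow_of_nonneg (by positivity) (by positivity)]

lemma srConst_mul_le_dpR {p : ℝ≥0∞} (hp : 1 ≤ p) (x y : ℝ × ℝ) :
    srConst p * (|x.1 - y.1| + |x.2 - y.2|) ≤ dpR p x y := by
  unfold srConst dpR; split
  · cases' le_total |x.1 - y.1| |x.2 - y.2| with h h
    · rw [max_eq_right h]; nlinarith [abs_nonneg (x.1 - y.1)]
    · rw [max_eq_left h]; nlinarith [abs_nonneg (x.2 - y.2)]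
  · next hpi => exact key_ineq (toReal_q hp hpi) (abs_nonneg _) (abs_nonneg _)

lemma dDelta_lb {p : ℝ≥0∞} (hp : 1 ≤ p) {a b : ℝ} (hab : a ≤ b) :
    ENNReal.ofReal (srConst p * (b - a)) ≤ dDelta p (a, b) := by
  refine le_iInf₂ fun z _ => ?_
  rw [dp_eq hp]
  refine ENNReal.ofReal_le_ofReal ?_
  have h1 : b - a ≤ |(a, b).1 - (z, z).1| + |(a, b).2 - (z, z).2| := by
    simp only []
    cases' abs_cases (a - z) with h h <;> cases' abs_cases (b - z) with h' h' <;> linarith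
  calc srConst p * (b - a) ≤ srConst p * (|(a, b).1 - (z, z).1| + |(a, b).2 - (z, z).2|) :=
        mul_le_mul_of_nonneg_left h1 srConst_pos.le
    _ ≤ _ := srConst_mul_le_dpR hp _ _

section lip
variable {p : ℝ≥0∞} {K : ℝ} {F : ℝ → ℝ}

lemma matched_bound (hp : 1 ≤ p) (hK : 0 ≤ K)
    (hlip : ∀ a ∈ Set.Ici (0 : ℝ), ∀ b ∈ Set.Ici (0 : ℝ), |F b - F a| ≤ K * |b - a|)
    {x x' : ℝ × ℝ} (hx1 : 0 ≤ x.1) (hx2 : 0 ≤ x.2) (hx1' : 0 ≤ x'.1) (hx2' : 0 ≤ x'.2) :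
    srConst p * |lifetime F x - lifetime F x'| ≤ K * dpR p x x' := by
  have h1 : |lifetime F x - lifetime F x'| ≤ K * (|x.1 - x'.1| + |x.2 - x'.2|) := by
    have e2 := hlip x'.2 hx2' x.2 hx2
    have e1 := hlip x'.1 hx1' x.1 hx1
    have : |lifetime F x - lifetime F x'| ≤ |F x.2 - F x'.2| + |F x.1 - F x'.1| := by
      unfold lifetime
      cases' abs_cases (F x.2 - F x'.2) with h h <;>
        cases' abs_cases (F x.1 - F x'.1) with h' h' <;>
        cases' abs_cases (F x.2 - F x.1 - (F x'.2 - F x'.1)) with h'' h'' <;> linarith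
    calc |lifetime F x - lifetime F x'| ≤ |F x.2 - F x'.2| + |F x.1 - F x'.1| := this
      _ ≤ K * |x.2 - x'.2| + K * |x.1 - x'.1| := add_le_add e2 e1
      _ = K * (|x.1 - x'.1| + |x.2 - x'.2|) := by ring
  calc srConst p * |lifetime F x - lifetime F x'|
      ≤ srConst p * (K * (|x.1 - x'.1| + |x.2 - x'.2|)) :=
        mul_le_mul_of_nonneg_left h1 srConst_pos.le
    _ = K * (srConst p * (|x.1 - x'.1| + |x.2 - x'.2|)) := by ring
    _ ≤ K * dpR p x x' := mul_le_mul_of_nonneg_left (srConst_mul_le_dpR hp _ _) hK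

lemma unmatched_bound
    (hlip : ∀ a ∈ Set.Ici (0 : ℝ), ∀ b ∈ Set.Ici (0 : ℝ), |F b - F a| ≤ K * |b - a|)
    {x : ℝ × ℝ} (hx1 : 0 ≤ x.1) (hx12 : x.1 ≤ x.2) :
    srConst p * lifetime F x ≤ K * (srConst p * (x.2 - x.1)) := by
  have h := hlip x.1 hx1 x.2 (le_trans hx1 hx12)
  have h2 : lifetime F x ≤ K * (x.2 - x.1) := by
    unfold lifetime
    calc F x.2 - F x.1 ≤ |F x.2 - F x.1| := le_abs_self _
      _ ≤ K * |x.2 - x.1| := h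
      _ = K * (x.2 - x.1) := by rw [abs_of_nonneg (by linarith)]
  calc srConst p * lifetime F x ≤ srConst p * (K * (x.2 - x.1)) :=
        mul_le_mul_of_nonneg_left h2 srConst_pos.le
    _ = K * (srConst p * (x.2 - x.1)) := by ring
end lip

section bridge
variable {p : ℝ≥0∞} {ι : Type} {s : Finset ι} {f g : ι → ℝ≥0∞}

lemma coe_sup_ennreal {h : ι → ℝ≥0} :
    ((s.sup h : ℝ≥0) : ℝ≥0∞) = s.sup (fun i => ((h i : ℝ≥0) : ℝ≥0∞)) := by
  classical
  induction s using Finset.induction with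
  | empty => simp
  | insert _ _ hx ih => rw [Finset.sup_insert, Finset.sup_insert, ← ih]; exact ENNReal.coe_max _ _

lemma pNormE_ofReal (hp : 1 ≤ p) {fr : ι → ℝ} (hf : ∀ i ∈ s, 0 ≤ fr i) :
    pNormE p s (fun i => ENNReal.ofReal (fr i)) = ENNReal.ofReal (pNormR p s fr) := by
  unfold pNormE pNormR; split
  · rw [ENNReal.ofReal_coe_nnreal, coe_sup_ennreal]
    refine Finset.sup_congr rfl fun i hi => ?_
    rw [Real.nnabs_of_nonneg (hf i hi)]
    rfl
  · next hpi =>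
    have hq : 1 ≤ p.toReal := toReal_q hp hpi
    have h1 : ∀ i ∈ s, ENNReal.ofReal (fr i) ^ p.toReal = ENNReal.ofReal (|fr i| ^ p.toReal) :=
      fun i hi => by
        rw [abs_of_nonneg (hf i hi)]
        exact ENNReal.ofReal_rpow_of_nonneg (hf i hi) (by linarith)
    rw [Finset.sum_congr rfl h1, ← ENNReal.ofReal_sum_of_nonneg (fun i hi => by positivity),
      ENNReal.ofReal_rpow_of_nonneg (by positivity) (by positivity)]

lemma pNormE_mono (hfg : ∀ i ∈ s, f i ≤ g i) : pNormE p s f ≤ pNormE p s g := by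
  unfold pNormE; split
  · exact Finset.sup_mono_fun hfg
  · exact ENNReal.rpow_le_rpow (Finset.sum_le_sum fun i hi =>
      ENNReal.rpow_le_rpow (hfg i hi) (ENNReal.toReal_nonneg)) (by positivity)

lemma pNorm3_mono {a b c a' b' c' : ℝ≥0∞} (h1 : a ≤ a') (h2 : b ≤ b') (h3 : c ≤ c') :
    pNorm3 p a b c ≤ pNorm3 p a' b' c' := by
  unfold pNorm3; split
  · exact max_le_max h1 (max_le_max h2 h3)
  · refine ENNReal.rpow_le_rpow ?_ (by positivity)
    gcongr <;> exact ENNReal.toReal_nonneg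

lemma pNorm3_ofReal (hp : 1 ≤ p) {a b c : ℝ} (ha : 0 ≤ a) (hb : 0 ≤ b) (hc : 0 ≤ c) :
    pNorm3 p (ENNReal.ofReal a) (ENNReal.ofReal b) (ENNReal.ofReal c)
      = ENNReal.ofReal (if p = ∞ then max a (max b c)
          else (a ^ p.toReal + b ^ p.toReal + c ^ p.toReal) ^ (1 / p.toReal)) := by
  have hmono : Monotone ENNReal.ofReal := fun x y h => ENNReal.ofReal_le_ofReal h
  unfold pNorm3; split
  · rw [hmono.map_max, hmono.map_max]
  · next hpi =>
    have hq : 1 ≤ p.toReal := toReal_q hp hpi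
    rw [ENNReal.ofReal_rpow_of_nonneg ha (by linarith),
      ENNReal.ofReal_rpow_of_nonneg hb (by linarith),
      ENNReal.ofReal_rpow_of_nonneg hc (by linarith),
      ← ENNReal.ofReal_add (by positivity) (by positivity),
      ← ENNReal.ofReal_add (by positivity) (by positivity),
      ENNReal.ofReal_rpow_of_nonneg (by positivity) (by positivity)]
end bridge

noncomputable def padZ {n : ℕ} (N z : ℕ) (v : Fin n → ℝ) : Fin N → ℝ := fun t =>
  if (t : ℕ) < z then 0 else if h2 : (t : ℕ) - z < n then v ⟨(t : ℕ) - z, h2⟩ else 0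

section merge
variable {p : ℝ≥0∞}

lemma padZ_nonneg {n : ℕ} {N z : ℕ} {v : Fin n → ℝ} (hv : ∀ j, 0 ≤ v j) (t : Fin N) :
    0 ≤ padZ N z v t := by
  unfold padZ; split
  · rfl
  · split
    · exact hv _
    · rfl

lemma padZ_monotone {n : ℕ} {N z : ℕ} (hN : N = z + n) {v : Fin n → ℝ}
    (hv : ∀ j, 0 ≤ v j) (hm : Monotone v) : Monotone (padZ N z v) := by
  intro t1 t2 h12
  have h1 := t1.2; have h2 := t2.2
  unfold padZ
  split
  · split
    · rfl
    · split
      · exact hv _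
      · rfl
  · next ht1 =>
    have ht2 : ¬ (t2 : ℕ) < z := by omega
    rw [if_neg ht2]
    have hr1 : (t1 : ℕ) - z < n := by omega
    have hr2 : (t2 : ℕ) - z < n := by omega
    rw [dif_pos hr1, dif_pos hr2]
    exact hm (by simp [Fin.le_def]; omega)

lemma merge0 {n : ℕ} (hp : 1 ≤ p) {N z : ℕ} {v : Fin n → ℝ} {k : ℕ} (hk : k ≤ z) :
    pNormR p (Finset.univ.filter fun t : Fin N => (t : ℕ) < k) (padZ N z v) = 0 := by
  have h0 : ∀ t ∈ (Finset.univ.filter fun t : Fin N => (t : ℕ) < k), padZ N z v t = 0 := by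
    intro t ht
    simp only [Finset.mem_filter] at ht
    unfold padZ
    rw [if_pos (by omega)]
  rw [pNormR_zeropad hp (Finset.empty_subset _) (fun i hi _ => h0 i hi)]
  unfold pNormR; split
  · simp
  · next hpi =>
    rw [Finset.sum_empty, Real.zero_rpow (one_div_ne_zero (pt_ne_zero hp hpi))]

lemma merge {n : ℕ} (hp : 1 ≤ p) (z N : ℕ) (hN : N = z + n) (v : Fin n → ℝ) (k : ℕ)
    (hk : z ≤ k) (hkN : k ≤ N) :
    pNormR p (Finset.univ.filter fun t : Fin N => (t : ℕ) < k) (padZ N z v)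
      = pNormR p (Finset.univ.filter fun j : Fin n => (j : ℕ) < k - z) v := by
  classical
  set e : Fin n → Fin N := fun j => ⟨z + j, by omega⟩ with hedef
  have he : Function.Injective e := by
    intro a b hab
    simp only [hedef, Fin.mk_eq_mk] at hab
    exact Fin.ext (by omega)
  have hset : ((Finset.univ.filter fun j : Fin n => (j : ℕ) < k - z).image e)
      = Finset.univ.filter fun t : Fin N => z ≤ (t : ℕ) ∧ (t : ℕ) < k := by
    ext t
    simp only [Finset.mem_image, Finset.mem_filter, Finset.mem_univ, true_and, hedef]
    constructor
    · rintro ⟨j, hj, rfl⟩; simp; omega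
    · rintro ⟨h1, h2⟩
      refine ⟨⟨(t : ℕ) - z, by omega⟩, ?_, ?_⟩
      · show (t : ℕ) - z < k - z
        omega
      · exact Fin.ext (show z + ((t : ℕ) - z) = (t : ℕ) by omega)
  have hsub : (Finset.univ.filter fun t : Fin N => z ≤ (t : ℕ) ∧ (t : ℕ) < k)
      ⊆ Finset.univ.filter fun t : Fin N => (t : ℕ) < k := by
    intro t; simp only [Finset.mem_filter, Finset.mem_univ, true_and]; omega
  rw [pNormR_zeropad hp hsub (by
    intro t ht hts
    simp only [Finset.mem_filter, Finset.mem_univ, true_and] at ht hts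
    unfold padZ
    rw [if_pos (by omega)]), ← hset, pNormR_image he.injOn]
  refine pNormR_congr fun j hj => ?_
  simp only [Finset.mem_filter, Finset.mem_univ, true_and] at hj
  unfold padZ
  rw [if_neg (show ¬ ((e j : ℕ) < z) by simp [hedef]),
    dif_pos (show (e j : ℕ) - z < n by simp [hedef])]
  congr 1
  exact Fin.ext (by simp [hedef])
end merge

lemma coe_sup_le_real {ι : Type} {s : Finset ι} {f : ι → ℝ≥0} {R : ℝ} (hR : 0 ≤ R)
    (h : ∀ x ∈ s, (f x : ℝ) ≤ R) : ((s.sup f : ℝ≥0) : ℝ) ≤ R := by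
  rw [← Real.coe_toNNReal R hR, NNReal.coe_le_coe]
  exact Finset.sup_le fun x hx => by
    rw [← NNReal.coe_le_coe, Real.coe_toNNReal _ hR]; exact h x hx

lemma rpow_one_div_rpow {q X : ℝ} (hX : 0 ≤ X) (hq : q ≠ 0) : (X ^ (1/q)) ^ q = X := by
  rw [← Real.rpow_mul hX, one_div_mul_cancel hq, Real.rpow_one]

set_option maxHeartbeats 2000000 in
/-- If `F : ℝ≥0 → ℝ≥0` is an increasing bijection which is `K`-Lipschitz
(`K > 0`), then for all persistence diagrams `D, D'` (with points ordered non-decreasingly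
by lifetime) one has `‖r_{p,F}(D) − r_{p,F}(D')‖_∞ ≤ K · W_p(D, D')`. -/
theorem stableRank_lipschitz
    (p : ℝ≥0∞) (hp : 1 ≤ p) (K : ℝ) (hK : 0 < K) (F : ℝ → ℝ)
    (hmono : StrictMonoOn F (Set.Ici (0 : ℝ)))
    (hbij : Set.BijOn F (Set.Ici (0 : ℝ)) (Set.Ici (0 : ℝ)))
    (hlip : ∀ a ∈ Set.Ici (0 : ℝ), ∀ b ∈ Set.Ici (0 : ℝ), |F b - F a| ≤ K * |b - a|)
    (D D' : PD) (hD : D.valid) (hD' : D'.valid)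
    (hord : ∀ i j : Fin D.m, i ≤ j → lifetime F (D.pts i) ≤ lifetime F (D.pts j))
    (hord' : ∀ i j : Fin D'.m, i ≤ j → lifetime F (D'.pts i) ≤ lifetime F (D'.pts j)) :
    (⨆ i : ℕ, ENNReal.ofReal |stableRankVec p F D i - stableRankVec p F D' i|)
      ≤ ENNReal.ofReal K * Wdist p D D' := by
  classical
  have hK0 : (0:ℝ) ≤ K := hK.le
  have hFmono : MonotoneOn F (Set.Ici (0 : ℝ)) := hmono.monotoneOn
  set m := D.m
  set n := D'.m
  set N := m + n with hNdef
  set u : Fin m → ℝ := fun i => lifetime F (D.pts i) with hudef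
  set v : Fin n → ℝ := fun j => lifetime F (D'.pts j) with hvdef
  have hu0 : ∀ i, 0 ≤ u i := fun i => by
    have h := hD i
    have : F (D.pts i).1 ≤ F (D.pts i).2 :=
      hFmono h.1 (le_trans h.1 h.2) h.2
    simp only [hudef, lifetime]; linarith
  have hv0 : ∀ j, 0 ≤ v j := fun j => by
    have h := hD' j
    have : F (D'.pts j).1 ≤ F (D'.pts j).2 :=
      hFmono h.1 (le_trans h.1 h.2) h.2
    simp only [hvdef, lifetime]; linarith
  have hum : Monotone u := fun a b h => hord a b h
  have hvm : Monotone v := fun a b h => hord' a b h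
  set MU : Fin N → ℝ := padZ N n u with hMUdef
  set MV : Fin N → ℝ := padZ N m v with hMVdef
  -- the stable rank values in terms of MU, MV
  have hrU : ∀ i : ℕ, stableRankVec p F D i
      = srConst p * pNormR p (Finset.univ.filter fun t : Fin N => (t : ℕ) < N - i) MU := by
    intro i
    by_cases him : i < m
    · rw [stableRankVec, if_pos him, hMUdef,
        merge hp n N (by omega) u (N - i) (by omega) (by omega)]
      have : N - i - n = m - i := by omega
      rw [this]
    · rw [stableRankVec, if_neg him, hMUdef, merge0 hp (by omega), mul_zero]
  have hrV : ∀ i : ℕ, stableRankVec p F D' i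
      = srConst p * pNormR p (Finset.univ.filter fun t : Fin N => (t : ℕ) < N - i) MV := by
    intro i
    by_cases him : i < n
    · rw [stableRankVec, if_pos him, hMVdef,
        merge hp m N (by omega) v (N - i) (by omega) (by omega)]
      have : N - i - m = n - i := by omega
      rw [this]
    · rw [stableRankVec, if_neg him, hMVdef, merge0 hp (by omega), mul_zero]
  have hMUm : Monotone MU := padZ_monotone (by omega) hu0 hum
  have hMVm : Monotone MV := padZ_monotone (by omega) hv0 hvm
  have hMU0 : ∀ t, 0 ≤ MU t := padZ_nonneg hu0
  have hMV0 : ∀ t, 0 ≤ MV t := padZ_nonneg hv0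
  -- reduce to a single matching
  rw [Wdist]
  rw [ENNReal.mul_iInf_of_ne (ENNReal.ofReal_pos.2 hK).ne' ENNReal.ofReal_ne_top]
  refine le_iInf fun I => ?_
  rw [ENNReal.mul_iInf_of_ne (ENNReal.ofReal_pos.2 hK).ne' ENNReal.ofReal_ne_top]
  refine le_iInf fun α => ?_
  rw [ENNReal.mul_iInf_of_ne (ENNReal.ofReal_pos.2 hK).ne' ENNReal.ofReal_ne_top]
  refine le_iInf fun hα => ?_
  refine iSup_le fun i => ?_
  -- setup for the fixed matching
  set cD : Fin m → ℝ := fun i' =>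
    if h : i' ∈ I then dpR p (D.pts i') (D'.pts (α ⟨i', h⟩))
    else srConst p * ((D.pts i').2 - (D.pts i').1) with hcDdef
  set cD' : Fin n → ℝ := fun j =>
    if j ∈ Finset.univ.image α then 0
    else srConst p * ((D'.pts j).2 - (D'.pts j).1) with hcD'def
  have hcD0 : ∀ i', 0 ≤ cD i' := fun i' => by
    simp only [hcDdef]
    split
    · exact dpR_nonneg
    · have h := hD i'
      have := srConst_pos (p := p)
      nlinarith [h.2]
  have hcD'0 : ∀ j, 0 ≤ cD' j := fun j => by
    simp only [hcD'def]
    split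
    · rfl
    · have h := hD' j
      have := srConst_pos (p := p)
      nlinarith [h.2]
  -- the involution on the disjoint sum
  set f0 : (Fin m ⊕ Fin n) → (Fin m ⊕ Fin n) := fun x =>
    match x with
    | Sum.inl i' => if h : i' ∈ I then Sum.inr (α ⟨i', h⟩) else Sum.inl i'
    | Sum.inr j => if h : ∃ i0 : ↥I, α i0 = j then Sum.inl ↑h.choose else Sum.inr j
    with hf0def
  have hinv : Function.Involutive f0 := by
    rintro (i' | j)
    · by_cases h : i' ∈ I
      · simp only [hf0def, dif_pos h]
        have hex : ∃ i0 : ↥I, α i0 = α ⟨i', h⟩ := ⟨⟨i', h⟩, rfl⟩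
        rw [dif_pos hex]
        have : hex.choose = ⟨i', h⟩ := hα hex.choose_spec
        rw [this]
      · simp only [hf0def, dif_neg h, dif_neg h]
    · by_cases h : ∃ i0 : ↥I, α i0 = j
      · simp only [hf0def, dif_pos h]
        rw [dif_pos (h.choose.2 : ↑h.choose ∈ I)]
        have : (⟨↑h.choose, h.choose.2⟩ : ↥I) = h.choose := Subtype.ext rfl
        rw [this, h.choose_spec]
      · simp only [hf0def, dif_neg h, dif_neg h]
  set σ0 : Equiv.Perm (Fin m ⊕ Fin n) := hinv.toPerm with hσ0def
  -- transport to Fin N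
  set ρU : (Fin m ⊕ Fin n) ≃ Fin N :=
    { toFun := Sum.elim (fun i' => ⟨n + (i' : ℕ), by omega⟩) (fun j => ⟨(j : ℕ), by omega⟩)
      invFun := fun t => if h : (t : ℕ) < n then Sum.inr ⟨(t : ℕ), h⟩
        else Sum.inl ⟨(t : ℕ) - n, by omega⟩
      left_inv := by
        rintro (i' | j) <;> dsimp only [Sum.elim_inl, Sum.elim_inr]
        · rw [dif_neg (by omega)]
          exact congrArg Sum.inl (Fin.ext (by simp))
        · rw [dif_pos (by exact j.2)]
      right_inv := by
        intro t
        dsimp only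
        by_cases h : (t : ℕ) < n
        · rw [dif_pos h]
          exact Fin.ext rfl
        · rw [dif_neg h]
          exact Fin.ext (by simp; omega) } with hρUdef
  set ρV : (Fin m ⊕ Fin n) ≃ Fin N :=
    { toFun := Sum.elim (fun i' => ⟨(i' : ℕ), by omega⟩) (fun j => ⟨m + (j : ℕ), by omega⟩)
      invFun := fun t => if h : (t : ℕ) < m then Sum.inl ⟨(t : ℕ), h⟩
        else Sum.inr ⟨(t : ℕ) - m, by omega⟩
      left_inv := by
        rintro (i' | j) <;> dsimp only [Sum.elim_inl, Sum.elim_inr]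
        · rw [dif_pos (by exact i'.2)]
        · rw [dif_neg (by omega)]
          exact congrArg Sum.inr (Fin.ext (by simp))
      right_inv := by
        intro t
        dsimp only
        by_cases h : (t : ℕ) < m
        · rw [dif_pos h]
          exact Fin.ext rfl
        · rw [dif_neg h]
          exact Fin.ext (by simp; omega) } with hρVdef
  set σh : Equiv.Perm (Fin N) := (ρU.symm.trans σ0).trans ρV with hσhdef
  set U : (Fin m ⊕ Fin n) → ℝ := Sum.elim u (fun _ => 0) with hUdef
  set V : (Fin m ⊕ Fin n) → ℝ := Sum.elim (fun _ => 0) v with hVdef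
  have hMUρ : ∀ x, MU (ρU x) = U x := by
    rintro (i' | j)
    · show MU ⟨n + (i' : ℕ), _⟩ = u i'
      simp only [hMUdef, padZ]
      rw [if_neg (by simp), dif_pos (by simp [i'.2])]
      exact congrArg u (Fin.ext (by simp))
    · show MU ⟨(j : ℕ), _⟩ = 0
      simp only [hMUdef, padZ]
      rw [if_pos (by exact j.2)]
  have hMVρ : ∀ x, MV (ρV x) = V x := by
    rintro (i' | j)
    · show MV ⟨(i' : ℕ), _⟩ = 0
      simp only [hMVdef, padZ]
      rw [if_pos (by exact i'.2)]
    · show MV ⟨m + (j : ℕ), _⟩ = v j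
      simp only [hMVdef, padZ]
      rw [if_neg (by simp), dif_pos (by simp [j.2])]
      exact congrArg v (Fin.ext (by simp))
  set eh : Fin N → ℝ := fun t => |MU t - MV (σh t)| with hehdef
  have hehρ : ∀ x, eh (ρU x) = |U x - V (σ0 x)| := by
    intro x
    simp only [hehdef, hσhdef]
    rw [hMUρ x]
    have : ((ρU.symm.trans σ0).trans ρV) (ρU x) = ρV (σ0 x) := by
      simp [Equiv.trans_apply]
    rw [this, hMVρ]
  have himgU : Finset.univ.image ⇑ρU = (Finset.univ : Finset (Fin N)) :=
    Finset.image_univ_equiv ρU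
  have hEh : pNormR p Finset.univ eh = pNormR p Finset.univ (fun x => |U x - V (σ0 x)|) := by
    rw [← himgU, pNormR_image (ρU.injective.injOn)]
    exact pNormR_congr fun x _ => hehρ x
  -- core inequality, both directions
  set k := N - i with hkdef
  set TU := pNormR p (Finset.univ.filter fun t : Fin N => (t : ℕ) < k) MU with hTUdef
  set TV := pNormR p (Finset.univ.filter fun t : Fin N => (t : ℕ) < k) MV with hTVdef
  have hcore1 : TU ≤ TV + pNormR p Finset.univ eh :=
    core hp (by omega) MU MV hMUm hMU0 σh
  have hcore2 : TV ≤ TU + pNormR p Finset.univ eh := by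
    have h := core hp (by omega : k ≤ N) MV MU hMVm hMV0 σh.symm
    have heq : pNormR p Finset.univ (fun t => |MV t - MU (σh.symm t)|)
        = pNormR p Finset.univ eh := by
      have himgσ : Finset.univ.image ⇑σh = (Finset.univ : Finset (Fin N)) :=
        Finset.image_univ_equiv σh
      conv_lhs => rw [← himgσ]
      rw [pNormR_image (σh.injective.injOn)]
      refine pNormR_congr fun t _ => ?_
      simp only [hehdef, Equiv.symm_apply_apply]
      exact abs_sub_comm _ _
    rwa [heq] at h
  have habs : |TU - TV| ≤ pNormR p Finset.univ eh := by
    rw [abs_sub_le_iff]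
    constructor <;> linarith
  -- entrywise bound
  have hentry : ∀ x, srConst p * |U x - V (σ0 x)| ≤ K * (Sum.elim cD cD' x) := by
    rintro (i' | j)
    · by_cases h : i' ∈ I
      · have hσ : σ0 (Sum.inl i') = Sum.inr (α ⟨i', h⟩) := by
          show f0 (Sum.inl i') = _
          simp only [hf0def, dif_pos h]
        rw [hσ]
        simp only [hUdef, hVdef, Sum.elim_inl, Sum.elim_inr, Sum.elim_inl]
        have hb := matched_bound (F := F) hp hK0 hlip (hD i').1
          (le_trans (hD i').1 (hD i').2) (hD' (α ⟨i', h⟩)).1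
          (le_trans (hD' (α ⟨i', h⟩)).1 (hD' (α ⟨i', h⟩)).2)
        simp only [hcDdef, dif_pos h]
        simpa [hudef, hvdef] using hb
      · have hσ : σ0 (Sum.inl i') = Sum.inl i' := by
          show f0 (Sum.inl i') = _
          simp only [hf0def, dif_neg h]
        rw [hσ]
        simp only [hUdef, hVdef, Sum.elim_inl]
        rw [sub_zero, abs_of_nonneg (hu0 i')]
        have hb := unmatched_bound (p := p) (F := F) hlip (hD i').1 (hD i').2
        simp only [hcDdef, dif_neg h]
        simpa [hudef] using hb
    · by_cases h : ∃ i0 : ↥I, α i0 = j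
      · have hσ : σ0 (Sum.inr j) = Sum.inl ↑h.choose := by
          show f0 (Sum.inr j) = _
          simp only [hf0def, dif_pos h]
        rw [hσ]
        simp only [hUdef, hVdef, Sum.elim_inr, Sum.elim_inl]
        have hj : j ∈ Finset.univ.image α := Finset.mem_image.2 ⟨h.choose, Finset.mem_univ _, h.choose_spec⟩
        simp only [hcD'def, if_pos hj]
        simp
      · have hσ : σ0 (Sum.inr j) = Sum.inr j := by
          show f0 (Sum.inr j) = _
          simp only [hf0def, dif_neg h]
        rw [hσ]
        simp only [hUdef, hVdef, Sum.elim_inr]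
        rw [zero_sub, abs_neg, abs_of_nonneg (hv0 j)]
        have hb := unmatched_bound (p := p) (F := F) hlip (hD' j).1 (hD' j).2
        have hj : j ∉ Finset.univ.image α := by
          intro hc
          obtain ⟨i0, -, hi0⟩ := Finset.mem_image.1 hc
          exact h ⟨i0, hi0⟩
        simp only [hcD'def, if_neg hj]
        simpa [hvdef] using hb
  -- combine: the real-side inequality
  have hreal : |stableRankVec p F D i - stableRankVec p F D' i|
      ≤ K * pNormR p Finset.univ (Sum.elim cD cD') := by
    rw [hrU i, hrV i, ← mul_sub, abs_mul, abs_of_nonneg srConst_pos.le]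
    calc srConst p * |TU - TV|
        ≤ srConst p * pNormR p Finset.univ eh :=
          mul_le_mul_of_nonneg_left habs srConst_pos.le
      _ = srConst p * pNormR p Finset.univ (fun x => |U x - V (σ0 x)|) := by rw [hEh]
      _ = pNormR p Finset.univ (fun x => srConst p * |U x - V (σ0 x)|) :=
          (pNormR_smul hp srConst_pos.le).symm
      _ ≤ pNormR p Finset.univ (fun x => K * (Sum.elim cD cD' x)) := by
          exact pNormR_mono hp (fun x _ => mul_nonneg srConst_pos.le (abs_nonneg _)) (fun x _ => hentry x)
      _ = K * pNormR p Finset.univ (Sum.elim cD cD') := pNormR_smul hp hK0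
  -- ENNReal side
  set AR := pNormR p Finset.univ (fun i' : ↥I => dpR p (D.pts i'.1) (D'.pts (α i'))) with hARdef
  set BR := pNormR p Iᶜ (fun i' => srConst p * ((D.pts i').2 - (D.pts i').1)) with hBRdef
  set CR := pNormR p (Finset.univ.image α)ᶜ
    (fun j => srConst p * ((D'.pts j).2 - (D'.pts j).1)) with hCRdef
  have hAR0 : 0 ≤ AR := pNormR_nonneg
  have hBR0 : 0 ≤ BR := pNormR_nonneg
  have hCR0 : 0 ≤ CR := pNormR_nonneg
  have hA : pNormE p Finset.univ (fun i' : ↥I => dp p (D.pts i'.1) (D'.pts (α i')))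
      = ENNReal.ofReal AR := by
    have : (fun i' : ↥I => dp p (D.pts i'.1) (D'.pts (α i')))
        = fun i' : ↥I => ENNReal.ofReal (dpR p (D.pts i'.1) (D'.pts (α i'))) :=
      funext fun i' => dp_eq hp _ _
    rw [this, pNormE_ofReal hp (fun i' _ => dpR_nonneg)]
  have hB : ENNReal.ofReal BR ≤ pNormE p Iᶜ (fun i' => dDelta p (D.pts i')) := by
    rw [← pNormE_ofReal hp (fun i' _ => by
      have h := hD i'
      have := srConst_pos (p := p)
      nlinarith [h.2])]
    refine pNormE_mono fun i' _ => ?_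
    have h := dDelta_lb (p := p) hp (hD i').2
    simpa using h
  have hC : ENNReal.ofReal CR
      ≤ pNormE p (Finset.univ.image α)ᶜ (fun j => dDelta p (D'.pts j)) := by
    rw [← pNormE_ofReal hp (fun j _ => by
      have h := hD' j
      have := srConst_pos (p := p)
      nlinarith [h.2])]
    refine pNormE_mono fun j _ => ?_
    have h := dDelta_lb (p := p) hp (hD' j).2
    simpa using h
  -- the real cost is bounded by the combined three-part norm
  have hsplit : pNormR p Finset.univ (Sum.elim cD cD')
      ≤ (if p = ∞ then max AR (max BR CR)
          else (AR ^ p.toReal + BR ^ p.toReal + CR ^ p.toReal) ^ (1 / p.toReal)) := by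
    by_cases hpi : p = ∞
    · rw [if_pos hpi]
      rw [pNormR, if_pos hpi]
      have hmax0 : 0 ≤ max AR (max BR CR) :=
        le_trans hAR0 (le_max_left _ _)
      refine coe_sup_le_real hmax0 ?_
      rintro (i' | j) -
      · by_cases h : i' ∈ I
        · refine le_trans ?_ (le_max_left _ _)
          rw [hARdef, pNormR, if_pos hpi, NNReal.coe_le_coe]
          have hmem : (⟨i', h⟩ : ↥I) ∈ (Finset.univ : Finset ↥I) := Finset.mem_univ _
          have := Finset.le_sup
            (f := fun i'' : ↥I => Real.nnabs (dpR p (D.pts i''.1) (D'.pts (α i'')))) hmem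
          refine le_trans (le_of_eq ?_) this
          congr 1
          simp only [Sum.elim_inl, hcDdef, dif_pos h]
        · refine le_trans ?_ (le_trans (le_max_left _ _) (le_max_right _ _))
          rw [hBRdef, pNormR, if_pos hpi, NNReal.coe_le_coe]
          have hmem : i' ∈ Iᶜ := Finset.mem_compl.2 h
          have := Finset.le_sup
            (f := fun i'' => Real.nnabs (srConst p * ((D.pts i'').2 - (D.pts i'').1))) hmem
          refine le_trans (le_of_eq ?_) this
          congr 1
          simp only [Sum.elim_inl, hcDdef, dif_neg h]
      · by_cases h : j ∈ Finset.univ.image α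
        · have : Sum.elim cD cD' (Sum.inr j) = 0 := by
            simp only [Sum.elim_inr, hcD'def, if_pos h]
          rw [this]
          simpa using hmax0
        · refine le_trans ?_ (le_trans (le_max_right _ _) (le_max_right _ _))
          rw [hCRdef, pNormR, if_pos hpi, NNReal.coe_le_coe]
          have hmem : j ∈ (Finset.univ.image α)ᶜ := Finset.mem_compl.2 h
          have := Finset.le_sup
            (f := fun j' => Real.nnabs (srConst p * ((D'.pts j').2 - (D'.pts j').1))) hmem
          refine le_trans (le_of_eq ?_) this
          congr 1
          simp only [Sum.elim_inr, hcD'def, if_neg h]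
    · rw [if_neg hpi]
      have hq : 1 ≤ p.toReal := toReal_q hp hpi
      have hq0 : p.toReal ≠ 0 := by linarith
      rw [pNormR, if_neg hpi]
      refine Real.rpow_le_rpow (by positivity) ?_ (by positivity)
      have hAq : AR ^ p.toReal = ∑ i'' : ↥I, |dpR p (D.pts i''.1) (D'.pts (α i''))| ^ p.toReal := by
        rw [hARdef, pNormR, if_neg hpi, rpow_one_div_rpow (by positivity) hq0]
      have hBq : BR ^ p.toReal
          = ∑ i'' ∈ Iᶜ, |srConst p * ((D.pts i'').2 - (D.pts i'').1)| ^ p.toReal := by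
        rw [hBRdef, pNormR, if_neg hpi, rpow_one_div_rpow (by positivity) hq0]
      have hCq : CR ^ p.toReal
          = ∑ j ∈ (Finset.univ.image α)ᶜ,
              |srConst p * ((D'.pts j).2 - (D'.pts j).1)| ^ p.toReal := by
        rw [hCRdef, pNormR, if_neg hpi, rpow_one_div_rpow (by positivity) hq0]
      rw [hAq, hBq, hCq, Fintype.sum_sum_type]
      have hsplitm : ∑ i'' : Fin m, |Sum.elim cD cD' (Sum.inl i'')| ^ p.toReal
          = (∑ i'' ∈ I, |cD i''| ^ p.toReal) + ∑ i'' ∈ Iᶜ, |cD i''| ^ p.toReal := by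
        simp only [Sum.elim_inl]
        rw [Finset.sum_add_sum_compl]
      have hsplitn : ∑ j : Fin n, |Sum.elim cD cD' (Sum.inr j)| ^ p.toReal
          = (∑ j ∈ Finset.univ.image α, |cD' j| ^ p.toReal)
            + ∑ j ∈ (Finset.univ.image α)ᶜ, |cD' j| ^ p.toReal := by
        simp only [Sum.elim_inr]
        rw [Finset.sum_add_sum_compl]
      rw [hsplitm, hsplitn]
      have e1 : ∑ i'' ∈ I, |cD i''| ^ p.toReal
          = ∑ i'' : ↥I, |dpR p (D.pts i''.1) (D'.pts (α i''))| ^ p.toReal := by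
        rw [← Finset.sum_attach I (fun i'' => |cD i''| ^ p.toReal), Finset.univ_eq_attach]
        refine Finset.sum_congr rfl fun x _ => ?_
        congr 1
        simp only [hcDdef, dif_pos x.2]
      have e2 : ∀ i'' ∈ Iᶜ, |cD i''| ^ p.toReal
          = |srConst p * ((D.pts i'').2 - (D.pts i'').1)| ^ p.toReal := by
        intro i'' h
        congr 1
        simp only [hcDdef, dif_neg (Finset.mem_compl.1 h)]
      have e3 : ∀ j ∈ Finset.univ.image α, |cD' j| ^ p.toReal = 0 := by
        intro j h
        simp only [hcD'def, if_pos h, abs_zero]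
        exact Real.zero_rpow hq0
      have e4 : ∀ j ∈ (Finset.univ.image α)ᶜ, |cD' j| ^ p.toReal
          = |srConst p * ((D'.pts j).2 - (D'.pts j).1)| ^ p.toReal := by
        intro j h
        congr 1
        simp only [hcD'def, if_neg (Finset.mem_compl.1 h)]
      rw [e1, Finset.sum_congr rfl e2, Finset.sum_congr rfl e3, Finset.sum_congr rfl e4,
        Finset.sum_const, smul_zero, zero_add]
  -- finish
  calc ENNReal.ofReal |stableRankVec p F D i - stableRankVec p F D' i|
      ≤ ENNReal.ofReal (K * pNormR p Finset.univ (Sum.elim cD cD')) :=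
        ENNReal.ofReal_le_ofReal hreal
    _ = ENNReal.ofReal K * ENNReal.ofReal (pNormR p Finset.univ (Sum.elim cD cD')) :=
        ENNReal.ofReal_mul hK0
    _ ≤ ENNReal.ofReal K * ENNReal.ofReal (if p = ∞ then max AR (max BR CR)
          else (AR ^ p.toReal + BR ^ p.toReal + CR ^ p.toReal) ^ (1 / p.toReal)) := by
        exact mul_le_mul_right (ENNReal.ofReal_le_ofReal hsplit) _
    _ = ENNReal.ofReal K * pNorm3 p (ENNReal.ofReal AR) (ENNReal.ofReal BR)
          (ENNReal.ofReal CR) := by rw [pNorm3_ofReal hp hAR0 hBR0 hCR0]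
    _ ≤ ENNReal.ofReal K * pNorm3 p
          (pNormE p Finset.univ (fun i' : ↥I => dp p (D.pts i'.1) (D'.pts (α i'))))
          (pNormE p Iᶜ (fun i' => dDelta p (D.pts i')))
          (pNormE p (Finset.univ.image α)ᶜ (fun j => dDelta p (D'.pts j))) := by
        refine mul_le_mul_right (pNorm3_mono (le_of_eq hA.symm) hB hC) _
end
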